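/- With notation as in the BWT-interval offset property: let W be a maximal repeat of T with equivalence class {W[1..m],...,W[k..m]}, let [p_i..q_i] be the suffix array interval of W[i..m], let c be a character, and let [x_i..y_i] be the suffix array interval of W[i..m]c (assumed nonempty for all i). Then x_i - p_i = x_1 - p_1 and y_i - p_i = y_1 - p_1 for all i in [1..k]; that is, the offset of the child interval within the parent interval is the same for all members of the equivalence class. -/

import Mathlib

/-- Number of occurrences (starting positions) of `W` in `T`; positions range over
`0..T.length` so that the empty string is counted `T.length + 1` times. -/
def numOcc {α : Type*} [DecidableEq α] (W T : List α) : ℕ :=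
  (List.range (T.length + 1)).countP (fun p => decide (W <+: T.drop p))

/-- The set of left extensions of `W` in `T`, with `none` acting as a sentinel extension for
an occurrence of `W` at the very beginning of `T`. -/
def leftExts {α : Type*} (W T : List α) : Set (Option α) :=
  {o | o.elim (W <+: T) (fun a => (a :: W) <:+: T)}

/-- The set of right extensions of `W` in `T`, with `none` acting as a sentinel extension for
an occurrence of `W` at the very end of `T`. -/
def rightExts {α : Type*} (W T : List α) : Set (Option α) :=
  {o | o.elim (W <:+ T) (fun b => (W ++ [b]) <:+: T)}

/-- `W` has at least two distinct left extensions in `T`. -/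
def LeftMaximal {α : Type*} (W T : List α) : Prop :=
  ∃ x ∈ leftExts W T, ∃ y ∈ leftExts W T, x ≠ y

/-- `W` has at least two distinct right extensions in `T`. -/
def RightMaximal {α : Type*} (W T : List α) : Prop :=
  ∃ x ∈ rightExts W T, ∃ y ∈ rightExts W T, x ≠ y

/-- `W` is a maximal repeat of `T`: a substring occurring more than once that is both
left-maximal and right-maximal. -/
def MaximalRepeat {α : Type*} [DecidableEq α] (W T : List α) : Prop :=
  W <:+: T ∧ 2 ≤ numOcc W T ∧ LeftMaximal W T ∧ RightMaximal W T

/-- The set of ending positions of the occurrences of `U` in `T`. -/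
def endSet {α : Type*} (U T : List α) : Set ℕ :=
  {j | ∃ p, p + U.length = j ∧ j ≤ T.length ∧ U <+: T.drop p}

lemma lex_append_iff' {α : Type*} [LinearOrder α] (A u v : List α) :
    List.Lex (·<·) (A ++ u) (A ++ v) ↔ List.Lex (·<·) u v := by
  induction A with
  | nil => simp
  | cons a A ih => simpa [List.lex_cons_iff] using ih

lemma card_filter_fin' {n : ℕ} (a b : ℕ) (hb : b ≤ n) :
    (Finset.univ.filter (fun r : Fin n => a ≤ (r : ℕ) ∧ (r : ℕ) < b)).card = b - a := by
  classical
  rw [← Nat.card_Ico a b]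
  refine Finset.card_bij (fun r _ => (r : ℕ)) ?_ ?_ ?_
  · intro r hr
    simp only [Finset.mem_filter, Finset.mem_univ, true_and] at hr
    exact Finset.mem_Ico.2 ⟨hr.1, hr.2⟩
  · intro a1 _ a2 _ h
    exact Fin.val_injective h
  · intro j hj
    rw [Finset.mem_Ico] at hj
    exact ⟨⟨j, lt_of_lt_of_le hj.2 hb⟩, by simp [hj.1, hj.2], rfl⟩


/-- BWT-interval offset property: with `[p i .. q i]` the suffix-array interval of the class
member `W[i..m] = W.drop (i-1)` of a maximal repeat `W` of `T`, and `[x i .. y i]` the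
(nonempty) suffix-array interval of `W[i..m]c`, the offset of the child interval within the
parent interval is the same for all members of the equivalence class:
`x i - p i = x 1 - p 1` and `y i - p i = y 1 - p 1`. -/
theorem class_child_intervals_same_offset {α : Type*} [LinearOrder α]
    (T T' : List α) (sent : α) (hT : T = T' ++ [sent]) (hsent : sent ∉ T')
    (hsmall : ∀ a ∈ T', sent < a)
    (sa : Fin T.length → Fin T.length) (hbij : Function.Bijective sa)
    (hsorted : ∀ r s : Fin T.length, r ≤ s →
      ¬ List.Lex (· < ·) (T.drop (sa s)) (T.drop (sa r)))
    (W : List α) (m k : ℕ) (hm : W.length = m) (hW : MaximalRepeat W T)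
    (hk1 : 1 ≤ k) (hkm : k ≤ m)
    (hclass : ∀ i, 1 ≤ i → i ≤ k → endSet (W.drop (i - 1)) T = endSet W T)
    (c : α) (p q x y : ℕ → ℕ)
    (hq : ∀ i, 1 ≤ i → i ≤ k → q i < T.length)
    (hint : ∀ i, 1 ≤ i → i ≤ k → ∀ r : Fin T.length,
      (W.drop (i - 1) <+: T.drop (sa r)) ↔ (p i ≤ (r : ℕ) ∧ (r : ℕ) ≤ q i))
    (hy : ∀ i, 1 ≤ i → i ≤ k → y i < T.length)
    (hocc : ∀ i, 1 ≤ i → i ≤ k → (W.drop (i - 1) ++ [c]) <:+: T)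
    (hchild : ∀ i, 1 ≤ i → i ≤ k → ∀ r : Fin T.length,
      ((W.drop (i - 1) ++ [c]) <+: T.drop (sa r)) ↔ (x i ≤ (r : ℕ) ∧ (r : ℕ) ≤ y i)) :
    ∀ i, 1 ≤ i → i ≤ k → x i - p i = x 1 - p 1 ∧ y i - p i = y 1 - p 1 := by
  classical
  set CX := ((Finset.range (T.length + 1)).filter
      (fun j => j ∈ endSet W T ∧ List.Lex (·<·) (T.drop j) [c])).card with hCXdef
  set CY := ((Finset.range (T.length + 1)).filter
      (fun j => j ∈ endSet W T ∧
        (List.Lex (·<·) (T.drop j) [c] ∨ (T.drop j).head? = some c))).card with hCYdef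
  have main : ∀ i, 1 ≤ i → i ≤ k →
      x i - p i = CX ∧ p i ≤ x i ∧ x i ≤ y i ∧ y i + 1 - p i = CY := by
    intro i hi1 hik
    have hlenW : (W.drop (i - 1)).length = m - (i - 1) := by
      rw [List.length_drop, hm]
    have hni1 : 1 ≤ (W.drop (i - 1)).length := by omega
    -- decomposition of a suffix having (W.drop (i - 1)) as prefix
    have decomp : ∀ r : Fin T.length, (W.drop (i - 1)) <+: T.drop ↑(sa r) →
        T.drop ↑(sa r) = (W.drop (i - 1)) ++ T.drop (↑(sa r) + (W.drop (i - 1)).length) := by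
      intro r hpre
      obtain ⟨t, ht⟩ := hpre
      have ht' : t = T.drop (↑(sa r) + (W.drop (i - 1)).length) := by
        have h2 := congrArg (List.drop (W.drop (i - 1)).length) ht
        rwa [List.drop_left, List.drop_drop] at h2
      rw [← ht, ht']
    have decomp2 : ∀ r : Fin T.length, ((W.drop (i - 1)) ++ [c]) <+: T.drop ↑(sa r) →
        ∃ u, T.drop (↑(sa r) + (W.drop (i - 1)).length) = c :: u := by
      intro r hpre
      obtain ⟨t, ht⟩ := hpre
      refine ⟨t, ?_⟩
      have h2 := congrArg (List.drop (W.drop (i - 1)).length) ht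
      rw [List.append_assoc, List.drop_left, List.drop_drop, List.singleton_append] at h2
      exact h2.symm
    -- the child interval is nonempty
    obtain ⟨s, t, hst⟩ := hocc i hi1 hik
    have hslen : s.length < T.length := by
      have := congrArg List.length hst
      simp [List.length_append] at this
      omega
    obtain ⟨r0, hr0⟩ := hbij.2 ⟨s.length, hslen⟩
    have hr0pre : ((W.drop (i - 1)) ++ [c]) <+: T.drop ↑(sa r0) := by
      rw [hr0]
      refine ⟨t, ?_⟩
      have : T.drop s.length = ((W.drop (i - 1)) ++ [c]) ++ t := by
        rw [← hst, List.append_assoc]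
        exact List.drop_left (l₁ := s)
      simp [this]
    have hxy : x i ≤ y i := by
      have := (hchild i hi1 hik r0).1 hr0pre
      omega
    have hyT := hy i hi1 hik
    have hxT : x i < T.length := lt_of_le_of_lt hxy hyT
    set rx : Fin T.length := ⟨x i, hxT⟩ with hrx
    set ry : Fin T.length := ⟨y i, hyT⟩ with hry
    have hrxc : ((W.drop (i - 1)) ++ [c]) <+: T.drop ↑(sa rx) :=
      (hchild i hi1 hik rx).2 ⟨le_refl _, hxy⟩
    have hryc : ((W.drop (i - 1)) ++ [c]) <+: T.drop ↑(sa ry) :=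
      (hchild i hi1 hik ry).2 ⟨hxy, le_refl _⟩
    have hrxp : (W.drop (i - 1)) <+: T.drop ↑(sa rx) := (List.prefix_append (W.drop (i - 1)) [c]).trans hrxc
    have hryp : (W.drop (i - 1)) <+: T.drop ↑(sa ry) := (List.prefix_append (W.drop (i - 1)) [c]).trans hryc
    have hpx : p i ≤ x i := ((hint i hi1 hik rx).1 hrxp).1
    have hxq : x i ≤ q i := ((hint i hi1 hik rx).1 hrxp).2
    have hyq : y i ≤ q i := ((hint i hi1 hik ry).1 hryp).2
    obtain ⟨ux, hux⟩ := decomp2 rx hrxc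
    obtain ⟨uy, huy⟩ := decomp2 ry hryc
    have hdrx : T.drop ↑(sa rx) = (W.drop (i - 1)) ++ (c :: ux) := by
      rw [decomp rx hrxp, hux]
    have hdry : T.drop ↑(sa ry) = (W.drop (i - 1)) ++ (c :: uy) := by
      rw [decomp ry hryp, huy]
    -- if the char after (W.drop (i - 1)) is c then we are in the child interval
    have hcichild : ∀ r : Fin T.length, p i ≤ ↑r → ↑r ≤ q i →
        (T.drop (↑(sa r) + (W.drop (i - 1)).length)).head? = some c → x i ≤ ↑r ∧ ↑r ≤ y i := by
      intro r hpr hrq hh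
      have hpre : (W.drop (i - 1)) <+: T.drop ↑(sa r) := (hint i hi1 hik r).2 ⟨hpr, hrq⟩
      have hd := decomp r hpre
      cases hu : T.drop (↑(sa r) + (W.drop (i - 1)).length) with
      | nil => rw [hu] at hh; simp at hh
      | cons b tl =>
        rw [hu] at hh
        simp at hh
        refine (hchild i hi1 hik r).1 ?_
        refine ⟨tl, ?_⟩
        rw [hd, hu, hh]
        simp
    -- the key characterization of the child interval via the following character
    have keyX : ∀ r : Fin T.length, p i ≤ ↑r → ↑r ≤ q i →
        (↑r < x i ↔ List.Lex (·<·) (T.drop (↑(sa r) + (W.drop (i - 1)).length)) [c]) := by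
      intro r hpr hrq
      have hpre : (W.drop (i - 1)) <+: T.drop ↑(sa r) := (hint i hi1 hik r).2 ⟨hpr, hrq⟩
      have hd := decomp r hpre
      constructor
      · intro hlt
        cases hu : T.drop (↑(sa r) + (W.drop (i - 1)).length) with
        | nil => exact List.Lex.nil
        | cons b tl =>
          rcases lt_trichotomy b c with h | h | h
          · exact List.Lex.rel h
          · exfalso
            have := (hcichild r hpr hrq (by rw [hu, h]; rfl)).1
            omega
          · exfalso
            have hlex : List.Lex (·<·) (T.drop ↑(sa rx)) (T.drop ↑(sa r)) := by
              rw [hd, hu, hdrx]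
              exact (lex_append_iff' (W.drop (i - 1)) _ _).2 (List.Lex.rel h)
            have := hsorted r rx
            have hnle : ¬ (r ≤ rx) := fun hle => (hsorted r rx hle) hlex
            rw [Fin.le_def] at hnle
            simp [hrx] at hnle
            omega
      · intro hlex
        have hlex2 : List.Lex (·<·) (T.drop ↑(sa r)) (T.drop ↑(sa rx)) := by
          rw [hd, hdrx]
          refine (lex_append_iff' (W.drop (i - 1)) _ _).2 ?_
          cases hu : T.drop (↑(sa r) + (W.drop (i - 1)).length) with
          | nil => exact List.Lex.nil
          | cons b tl =>
            rw [hu] at hlex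
            cases hlex with
            | rel h => exact List.Lex.rel h
            | cons h => cases h
        have hnle : ¬ (rx ≤ r) := fun hle => (hsorted rx r hle) hlex2
        rw [Fin.le_def] at hnle
        simp [hrx] at hnle
        exact hnle
    have keyY : ∀ r : Fin T.length, p i ≤ ↑r → ↑r ≤ q i →
        (↑r ≤ y i ↔ (List.Lex (·<·) (T.drop (↑(sa r) + (W.drop (i - 1)).length)) [c] ∨
          (T.drop (↑(sa r) + (W.drop (i - 1)).length)).head? = some c)) := by
      intro r hpr hrq
      have hpre : (W.drop (i - 1)) <+: T.drop ↑(sa r) := (hint i hi1 hik r).2 ⟨hpr, hrq⟩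
      have hd := decomp r hpre
      constructor
      · intro hle
        by_cases hxr : x i ≤ ↑r
        · right
          obtain ⟨u, hu⟩ := decomp2 r ((hchild i hi1 hik r).2 ⟨hxr, hle⟩)
          rw [hu]; rfl
        · left
          exact (keyX r hpr hrq).1 (by omega)
      · intro h
        cases h with
        | inl hlex =>
          have := (keyX r hpr hrq).2 hlex
          omega
        | inr hh =>
          exact (hcichild r hpr hrq hh).2
    -- counting
    have hcardA : (Finset.univ.filter
        (fun r : Fin T.length => p i ≤ (r : ℕ) ∧ (r : ℕ) < x i)).card = x i - p i :=
      card_filter_fin' _ _ (le_of_lt hxT)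
    have hcardB : (Finset.univ.filter
        (fun r : Fin T.length => p i ≤ (r : ℕ) ∧ (r : ℕ) < y i + 1)).card = y i + 1 - p i :=
      card_filter_fin' _ _ (by omega)
    have hmemE : ∀ r : Fin T.length, p i ≤ ↑r → ↑r ≤ q i →
        (↑(sa r) + (W.drop (i - 1)).length ∈ endSet W T ∧ ↑(sa r) + (W.drop (i - 1)).length ≤ T.length) := by
      intro r hpr hrq
      have hpre : (W.drop (i - 1)) <+: T.drop ↑(sa r) := (hint i hi1 hik r).2 ⟨hpr, hrq⟩
      have hlen : (W.drop (i - 1)).length ≤ (T.drop ↑(sa r)).length := hpre.length_le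
      simp only [List.length_drop] at hlen
      have hsaT : (↑(sa r) : ℕ) < T.length := (sa r).isLt
      have hle : ↑(sa r) + (W.drop (i - 1)).length ≤ T.length := by omega
      refine ⟨?_, hle⟩
      rw [← hclass i hi1 hik]
      exact ⟨↑(sa r), rfl, hle, hpre⟩
    -- bijection for the x-count
    have hAC : (Finset.univ.filter
        (fun r : Fin T.length => p i ≤ (r : ℕ) ∧ (r : ℕ) < x i)).card = CX := by
      rw [hCXdef]
      refine Finset.card_bij (fun r _ => ↑(sa r) + (W.drop (i - 1)).length) ?_ ?_ ?_
      · intro r hr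
        simp only [Finset.mem_filter, Finset.mem_univ, true_and] at hr
        have hrq : (↑r : ℕ) ≤ q i := by omega
        obtain ⟨hE, hle⟩ := hmemE r hr.1 hrq
        simp only [Finset.mem_filter, Finset.mem_range]
        exact ⟨by omega, hE, (keyX r hr.1 hrq).1 hr.2⟩
      · intro a1 _ a2 _ h
        have : (↑(sa a1) : ℕ) = ↑(sa a2) := by omega
        exact hbij.1 (Fin.val_injective this)
      · intro b hb
        simp only [Finset.mem_filter, Finset.mem_range] at hb
        obtain ⟨hbr, hbE, hbl⟩ := hb
        rw [← hclass i hi1 hik] at hbE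
        obtain ⟨p0, hp0, hbT, hpre0⟩ := hbE
        have hp0T : p0 < T.length := by omega
        obtain ⟨r, hr⟩ := hbij.2 ⟨p0, hp0T⟩
        have hsar : (↑(sa r) : ℕ) = p0 := by rw [hr]
        have hprer : (W.drop (i - 1)) <+: T.drop ↑(sa r) := by rw [hsar]; exact hpre0
        obtain ⟨hpr, hrq⟩ := (hint i hi1 hik r).1 hprer
        have hrx : (↑r : ℕ) < x i := by
          refine (keyX r hpr hrq).2 ?_
          rw [hsar, hp0]
          exact hbl
        refine ⟨r, by simp [Finset.mem_filter, hpr, hrx], ?_⟩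
        show ↑(sa r) + (W.drop (i - 1)).length = b
        omega
    -- bijection for the y-count
    have hBC : (Finset.univ.filter
        (fun r : Fin T.length => p i ≤ (r : ℕ) ∧ (r : ℕ) < y i + 1)).card = CY := by
      rw [hCYdef]
      refine Finset.card_bij (fun r _ => ↑(sa r) + (W.drop (i - 1)).length) ?_ ?_ ?_
      · intro r hr
        simp only [Finset.mem_filter, Finset.mem_univ, true_and] at hr
        have hry' : (↑r : ℕ) ≤ y i := by omega
        have hrq : (↑r : ℕ) ≤ q i := le_trans hry' hyq
        obtain ⟨hE, hle⟩ := hmemE r hr.1 hrq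
        simp only [Finset.mem_filter, Finset.mem_range]
        exact ⟨by omega, hE, (keyY r hr.1 hrq).1 hry'⟩
      · intro a1 _ a2 _ h
        have : (↑(sa a1) : ℕ) = ↑(sa a2) := by omega
        exact hbij.1 (Fin.val_injective this)
      · intro b hb
        simp only [Finset.mem_filter, Finset.mem_range] at hb
        obtain ⟨hbr, hbE, hbl⟩ := hb
        rw [← hclass i hi1 hik] at hbE
        obtain ⟨p0, hp0, hbT, hpre0⟩ := hbE
        have hp0T : p0 < T.length := by omega
        obtain ⟨r, hr⟩ := hbij.2 ⟨p0, hp0T⟩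
        have hsar : (↑(sa r) : ℕ) = p0 := by rw [hr]
        have hprer : (W.drop (i - 1)) <+: T.drop ↑(sa r) := by rw [hsar]; exact hpre0
        obtain ⟨hpr, hrq⟩ := (hint i hi1 hik r).1 hprer
        have hrle : (↑r : ℕ) ≤ y i := by
          refine (keyY r hpr hrq).2 ?_
          rw [hsar, hp0]
          exact hbl
        refine ⟨r, by simp only [Finset.mem_filter, Finset.mem_univ, true_and]; omega, ?_⟩
        show ↑(sa r) + (W.drop (i - 1)).length = b
        omega
    exact ⟨by omega, hpx, hxy, by omega⟩
  intro i hi1 hik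
  obtain ⟨e1, hpx_i, hxy_i, e2⟩ := main i hi1 hik
  obtain ⟨f1, hpx_1, hxy_1, f2⟩ := main 1 le_rfl hk1
  exact ⟨by omega, by omega⟩
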